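/- Let T be a finite connected tree with a weight function wt on vertices taking nonnegative integer values, with total weight m, such that T is stable (for every vertex v, wt(v) plus the number of edges at v is at least 3), and suppose there is no edge e of T such that the two subtrees obtained by deleting e each have total weight m/2. Then T admits a central vertex, i.e., a vertex v such that every connected component of T minus v has total weight strictly less than m/2. -/

import Mathlib

/-! Weighted trees: a finite connected tree with nonnegative integer vertex
weights.  `branchWeight G wt v u` is the total weight of the connected
component containing `u` of the graph obtained from `G` by removing the
vertex `v` (implemented by deleting all edges incident to `v` and discarding
`v` itself).  A vertex is central if every such complementary component has
total weight `< m/2`, where `m` is the total weight. -/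

noncomputable def totalWeight {V : Type*} [Fintype V] (wt : V → ℕ) : ℕ :=
  ∑ v, wt v

open Classical in
noncomputable def branchWeight {V : Type*} [Fintype V] (G : SimpleGraph V)
    (wt : V → ℕ) (v u : V) : ℕ :=
  ∑ w, if (G.deleteEdges (G.incidenceSet v)).Reachable u w ∧ w ≠ v then wt w else 0

/-- `v` is a central vertex: every connected component of `G` minus `v`
has total weight strictly less than half the total weight. -/
def IsCentral {V : Type*} [Fintype V] (G : SimpleGraph V) (wt : V → ℕ) (v : V) : Prop :=
  ∀ u, u ≠ v → 2 * branchWeight G wt v u < totalWeight wt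

open Classical in
/-- Weight of the side containing `a` after deleting the edge `{a,b}`. -/
noncomputable def sideWeight {V : Type*} [Fintype V] (G : SimpleGraph V)
    (wt : V → ℕ) (a b : V) : ℕ :=
  ∑ w, if (G.deleteEdges {s(a, b)}).Reachable a w then wt w else 0

open SimpleGraph Finset

namespace CentralAux

variable {V : Type*} {G : SimpleGraph V}

/-- In a tree, each edge is a bridge. -/
lemma tree_bridge (htree : G.IsTree) {a b : V} (hab : G.Adj a b) :
    ¬ (G.deleteEdges {s(a,b)}).Reachable a b :=
  (SimpleGraph.isAcyclic_iff_forall_adj_isBridge.mp htree.2) hab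

/-- A walk avoiding `v` gives reachability in `G` minus the incidence set of `v`. -/
lemma reach_del_inc_of_walk {v x y : V} (p : G.Walk x y) (hv : v ∉ p.support) :
    (G.deleteEdges (G.incidenceSet v)).Reachable x y := by
  induction p with
  | nil => exact Reachable.refl _
  | @cons a b c h q ih =>
      rw [SimpleGraph.Walk.support_cons, List.mem_cons] at hv
      push_neg at hv
      have hb : v ≠ b := fun hvb => hv.2 (hvb ▸ q.start_mem_support)
      have hadj : (G.deleteEdges (G.incidenceSet v)).Adj a b := by
        rw [SimpleGraph.deleteEdges_adj]
        refine ⟨h, fun hmem => ?_⟩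
        rcases Sym2.mem_iff.mp hmem.2 with h2 | h2
        · exact hv.1 h2
        · exact hb h2
      exact hadj.reachable.trans (ih hv.2)

/-- Every vertex is on one of the two sides of an edge (in a connected graph). -/
lemma reach_cover (hconn : G.Connected) {a b : V} (hab : G.Adj a b) (w : V) :
    (G.deleteEdges {s(a,b)}).Reachable a w ∨ (G.deleteEdges {s(a,b)}).Reachable b w := by
  set H := G.deleteEdges {s(a,b)} with hH
  have key : ∀ {x y : V} (_ : G.Walk x y),
      (H.Reachable a x ∨ H.Reachable b x) → (H.Reachable a y ∨ H.Reachable b y) := by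
    intro x y p
    induction p with
    | nil => exact id
    | @cons c d e h q ih =>
        intro hx
        refine ih ?_
        by_cases hcd : s(c,d) = s(a,b)
        · rcases Sym2.eq_iff.mp hcd with ⟨rfl, rfl⟩ | ⟨rfl, rfl⟩
          · exact Or.inr (Reachable.refl _)
          · exact Or.inl (Reachable.refl _)
        · have hadj : H.Adj c d := SimpleGraph.deleteEdges_adj.mpr ⟨h, by simpa using hcd⟩
          exact hx.imp (fun hr => hr.trans hadj.reachable) (fun hr => hr.trans hadj.reachable)
  exact key (hconn a w).some (Or.inl (Reachable.refl _))

lemma reach_not_both (htree : G.IsTree) {a b : V} (hab : G.Adj a b) {w : V}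
    (ha : (G.deleteEdges {s(a,b)}).Reachable a w) :
    ¬ (G.deleteEdges {s(a,b)}).Reachable b w :=
  fun hb => tree_bridge htree hab (ha.trans hb.symm)

/-- If `w` is on `u`'s side of the edge `uv`, then `dist v w = dist u w + 1`. -/
lemma dist_side (htree : G.IsTree) {u v w : V} (huv : G.Adj u v)
    (hw : (G.deleteEdges {s(u,v)}).Reachable u w) :
    G.dist v w = G.dist u w + 1 := by
  classical
  have hconn := htree.1
  have hle : G.dist v w ≤ G.dist u w + 1 := by
    have := hconn.dist_triangle (u := v) (v := u) (w := w)
    have h1 : G.dist v u = 1 := SimpleGraph.dist_eq_one_iff_adj.mpr huv.symm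
    omega
  obtain ⟨p, hp⟩ := SimpleGraph.Connected.exists_walk_length_eq_dist hconn v w
  have hmem : s(u,v) ∈ p.edges := by
    by_contra hne
    have hsub : ∀ e ∈ p.edges, e ∈ (G.deleteEdges {s(u,v)}).edgeSet := by
      intro e he
      rw [SimpleGraph.edgeSet_deleteEdges]
      exact ⟨p.edges_subset_edgeSet he, by rintro rfl; exact hne he⟩
    have : (G.deleteEdges {s(u,v)}).Reachable v w := ⟨p.transfer _ hsub⟩
    exact tree_bridge htree huv (hw.trans this.symm)
  have hus : u ∈ p.support := p.fst_mem_support_of_mem_edges hmem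
  have hsplit := p.take_spec hus
  have hlen : (p.takeUntil u hus).length + (p.dropUntil u hus).length = p.length := by
    conv_rhs => rw [← hsplit]
    rw [SimpleGraph.Walk.length_append]
  have htpos : 0 < (p.takeUntil u hus).length := by
    rcases Nat.eq_zero_or_pos (p.takeUntil u hus).length with h0 | h
    · exact absurd (SimpleGraph.Walk.eq_of_length_eq_zero h0) huv.ne'
    · exact h
  have hdrop : G.dist u w ≤ (p.dropUntil u hus).length := SimpleGraph.dist_le _
  omega

variable [Fintype V]

/-- The two sides of an edge partition the total weight. -/
lemma side_add_side (htree : G.IsTree) {a b : V} (hab : G.Adj a b) (wt : V → ℕ) :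
    sideWeight G wt a b + sideWeight G wt b a = totalWeight wt := by
  classical
  unfold sideWeight totalWeight
  rw [← Finset.sum_add_distrib]
  refine Finset.sum_congr rfl fun w _ => ?_
  have hswap : s(b,a) = s(a,b) := Sym2.eq_swap
  rw [hswap]
  rcases reach_cover htree.1 hab w with h | h
  · rw [if_pos h, if_neg (reach_not_both htree hab h)]
    omega
  · rw [if_pos h, if_neg (fun ha => reach_not_both htree hab ha h)]
    omega

/-- The branch of `v` through a neighbour `u` is the `u`-side of the edge `uv`. -/
lemma branch_eq_side (htree : G.IsTree) {v u : V} (hvu : G.Adj v u) (wt : V → ℕ) :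
    branchWeight G wt v u = sideWeight G wt u v := by
  classical
  unfold branchWeight sideWeight
  refine Finset.sum_congr rfl fun w _ => ?_
  refine if_congr ⟨fun hw => ?_, fun hw => ?_⟩ rfl rfl
  · -- monotone direction
    refine hw.1.mono ?_
    intro x y hxy
    rw [SimpleGraph.deleteEdges_adj] at hxy ⊢
    refine ⟨hxy.1, fun hmem => hxy.2 ?_⟩
    rw [Set.mem_singleton_iff] at hmem
    rw [hmem]
    exact ⟨hvu.symm, Sym2.mem_mk_right u v⟩
  · obtain ⟨p⟩ := id hw
    have hsub : ∀ e ∈ p.edges, e ∈ G.edgeSet := fun e he =>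
      (SimpleGraph.edgeSet_deleteEdges _ ▸ p.edges_subset_edgeSet he).1
    have hvsupp : v ∉ p.support := by
      intro hvs
      exact tree_bridge htree hvu.symm ⟨p.takeUntil v hvs⟩
    have hwne : w ≠ v := by
      rintro rfl
      exact tree_bridge htree hvu.symm hw
    have := reach_del_inc_of_walk (p.transfer G hsub)
      (by rwa [SimpleGraph.Walk.support_transfer])
    exact ⟨this, hwne⟩

/-- Branch weight only depends on the component. -/
lemma branch_congr {v u u' : V} (h : (G.deleteEdges (G.incidenceSet v)).Reachable u u')
    (wt : V → ℕ) : branchWeight G wt v u = branchWeight G wt v u' := by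
  classical
  unfold branchWeight
  refine Finset.sum_congr rfl fun w _ => ?_
  exact if_congr (and_congr_left' ⟨fun hw => h.symm.trans hw, fun hw => h.trans hw⟩) rfl rfl

omit [Fintype V] in
/-- Every `u₀ ≠ v` lies in the branch of some neighbour of `v`. -/
lemma exists_adj_branch (htree : G.IsTree) {v u₀ : V} (h : u₀ ≠ v) :
    ∃ u, G.Adj v u ∧ (G.deleteEdges (G.incidenceSet v)).Reachable u u₀ := by
  classical
  obtain ⟨p⟩ := htree.1 v u₀
  have hp := p.bypass_isPath
  rcases hq : p.bypass with _ | @⟨_, z, _, hadj, q⟩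
  · exact absurd rfl h.symm
  · rw [hq, SimpleGraph.Walk.cons_isPath_iff] at hp
    exact ⟨z, hadj, reach_del_inc_of_walk q hp.2⟩

end CentralAux

open CentralAux in
/-- A stable weighted tree with no edge splitting the total weight `m` into two
halves of weight exactly `m/2` admits a central vertex. -/
theorem exists_central_vertex {V : Type*} [Fintype V] (G : SimpleGraph V)
    [DecidableRel G.Adj] (wt : V → ℕ)
    (htree : G.IsTree)
    (hstable : ∀ v, 3 ≤ wt v + G.degree v)
    (hstar : ¬ ∃ a b, G.Adj a b ∧
      2 * sideWeight G wt a b = totalWeight wt ∧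
      2 * sideWeight G wt b a = totalWeight wt) :
    ∃ v, IsCentral G wt v := by
  classical
  have hconn := htree.1
  have : Nonempty V := hconn.nonempty
  obtain ⟨v, -, hv⟩ := Finset.exists_min_image Finset.univ
    (fun x => ∑ w, wt w * G.dist x w) Finset.univ_nonempty
  refine ⟨v, fun u₀ hu₀ => ?_⟩
  obtain ⟨u, hadj, hreach⟩ := exists_adj_branch htree hu₀
  have key : ∀ w, wt w * G.dist u w +
      2 * (if (G.deleteEdges {s(u,v)}).Reachable u w then wt w else 0) =
      wt w * G.dist v w + wt w := by
    intro w
    have hswap : s(v,u) = s(u,v) := Sym2.eq_swap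
    have hcov := reach_cover hconn hadj.symm w
    rcases hcov with h | h
    · rw [if_pos h, dist_side htree hadj.symm h]
      ring
    · have h' : (G.deleteEdges {s(v,u)}).Reachable v w := by rwa [hswap]
      have hnu : ¬ (G.deleteEdges {s(u,v)}).Reachable u w :=
        fun hu => reach_not_both htree hadj.symm hu h
      rw [if_neg hnu, dist_side htree hadj h']
      ring
  have hsum : (∑ w, wt w * G.dist u w) + 2 * sideWeight G wt u v =
      (∑ w, wt w * G.dist v w) + totalWeight wt := by
    unfold sideWeight totalWeight
    rw [Finset.mul_sum, ← Finset.sum_add_distrib, ← Finset.sum_add_distrib]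
    exact Finset.sum_congr rfl fun w _ => by convert key w
  have hmin := hv u (Finset.mem_univ u)
  have hle : 2 * sideWeight G wt u v ≤ totalWeight wt := by
    omega
  have hne : 2 * sideWeight G wt u v ≠ totalWeight wt := by
    intro he
    refine hstar ⟨u, v, hadj.symm, he, ?_⟩
    have := side_add_side htree hadj.symm wt
    omega
  have hbw : branchWeight G wt v u₀ = sideWeight G wt u v := by
    rw [← branch_congr hreach wt, branch_eq_side htree hadj wt]
  rw [hbw]
  exact lt_of_le_of_ne hle hne
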